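/- For every nonnegative integer r, every f ∈ ℂ^N and every t with 0 < t ≤ λ_N^{−1/2}, one has K_r(f, t) ≤ (π/2)^r · ω_r(f, t). -/

import Mathlib

open Matrix

noncomputable section

/-- Euclidean (2-)norm on `ℂ^N`. -/
def cnorm2 {N : ℕ} (f : Fin N → ℂ) : ℝ := Real.sqrt (∑ i, ‖f i‖ ^ 2)

/-- The spectral operator `Σ_j c_j u_j u_j^*`. -/
def specOp {N : ℕ} (u : Fin N → Fin N → ℂ) (c : Fin N → ℂ) : Matrix (Fin N) (Fin N) ℂ :=
  ∑ j, c j • Matrix.vecMulVec (u j) (star (u j))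

/-- The graph translation operator `T_s = Σ_j e^{i s √λ_j} u_j u_j^*`. -/
def Tmat {N : ℕ} (u : Fin N → Fin N → ℂ) (lam : Fin N → ℝ) (s : ℝ) :
    Matrix (Fin N) (Fin N) ℂ :=
  specOp u (fun j => Complex.exp (Complex.I * (s : ℂ) * (Real.sqrt (lam j) : ℂ)))

/-- The `r`-th modulus of smoothness `ω_r(f,t) = sup_{|s| ≤ t} ‖(T_s - I)^r f‖₂`. -/
def omegaMod {N : ℕ} (u : Fin N → Fin N → ℂ) (lam : Fin N → ℝ) (r : ℕ) (f : Fin N → ℂ)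
    (t : ℝ) : ℝ :=
  ⨆ s : {s : ℝ // |s| ≤ t}, cnorm2 (((Tmat u lam s.1 - 1) ^ r).mulVec f)

/-- Functional calculus power `L^x = Σ_j λ_j^x u_j u_j^*` (with `0^0 = 1`). -/
def Lpow {N : ℕ} (u : Fin N → Fin N → ℂ) (lam : Fin N → ℝ) (x : ℝ) :
    Matrix (Fin N) (Fin N) ℂ :=
  specOp u (fun j => ((lam j ^ x : ℝ) : ℂ))

/-- The `K`-functional `K_r(f,t) = inf_g ( ‖f-g‖₂ + (t/2)^r ‖L^{r/2} g‖₂ )`. -/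
def Kfun {N : ℕ} (u : Fin N → Fin N → ℂ) (lam : Fin N → ℝ) (r : ℕ) (f : Fin N → ℂ)
    (t : ℝ) : ℝ :=
  ⨅ g : Fin N → ℂ, (cnorm2 (f - g) + (t / 2) ^ r * cnorm2 ((Lpow u lam ((r : ℝ) / 2)).mulVec g))

namespace Aux7

lemma unitary1 {N : ℕ} (u : Fin N → Fin N → ℂ)
    (hu : ∀ i j, star (u i) ⬝ᵥ u j = if i = j then 1 else 0) :
    ((Matrix.of u)ᵀ)ᴴ * (Matrix.of u)ᵀ = 1 := by
  ext j k
  have h := hu j k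
  simp only [dotProduct, Pi.star_apply] at h
  simp only [Matrix.mul_apply, Matrix.conjTranspose_apply, Matrix.transpose_apply,
    Matrix.of_apply, Matrix.one_apply, RCLike.star_def]
  rw [← h]
  exact Finset.sum_congr rfl fun i _ => by simp [RCLike.star_def, mul_comm]

lemma norm_spec {N : ℕ} (V : Matrix (Fin N) (Fin N) ℂ) (hV : Vᴴ * V = 1)
    (c : Fin N → ℂ) (f : Fin N → ℂ) :
    ∑ i, ‖((V * Matrix.diagonal c * Vᴴ).mulVec f) i‖ ^ 2
      = ∑ j, ‖c j‖ ^ 2 * ‖(Vᴴ.mulVec f) j‖ ^ 2 := by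
  have sum_sq_mulVec : ∀ z : Fin N → ℂ, ∑ i, ‖(V.mulVec z) i‖ ^ 2 = ∑ j, ‖z j‖ ^ 2 := by
    intro z
    have key : ∀ w : Fin N → ℂ, star w ⬝ᵥ w = ((∑ i, ‖w i‖ ^ 2 : ℝ) : ℂ) := by
      intro w
      simp only [dotProduct, Pi.star_apply, RCLike.star_def]
      push_cast
      refine Finset.sum_congr rfl fun i _ => ?_
      rw [mul_comm, Complex.mul_conj']
    have h1 : star (V.mulVec z) ⬝ᵥ (V.mulVec z) = star z ⬝ᵥ z := by
      rw [star_mulVec, dotProduct_mulVec, vecMul_vecMul, hV, vecMul_one]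
    rw [key, key] at h1
    exact_mod_cast h1
  have hd : (Matrix.diagonal c).mulVec (Vᴴ.mulVec f) = fun j => c j * (Vᴴ.mulVec f) j :=
    funext fun j => mulVec_diagonal c (Vᴴ.mulVec f) j
  have h1 : (V * Matrix.diagonal c * Vᴴ).mulVec f
      = V.mulVec (fun j => c j * (Vᴴ.mulVec f) j) := by
    rw [← mulVec_mulVec, ← mulVec_mulVec, hd]
  rw [h1, sum_sq_mulVec]
  exact Finset.sum_congr rfl fun j _ => by rw [norm_mul, mul_pow]

lemma specOp_eq' {N : ℕ} (u : Fin N → Fin N → ℂ) (c : Fin N → ℂ) :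
    specOp u c = (Matrix.of u)ᵀ * Matrix.diagonal c * ((Matrix.of u)ᵀ)ᴴ := by
  ext i k
  rw [specOp, Matrix.mul_apply]
  simp only [Matrix.mul_diagonal, Matrix.sum_apply, Matrix.smul_apply, Matrix.vecMulVec_apply,
    Matrix.conjTranspose_apply, Matrix.transpose_apply, Matrix.of_apply, Pi.star_apply,
    smul_eq_mul, RCLike.star_def]
  exact Finset.sum_congr rfl fun j _ => by ring

lemma conj_pow {N : ℕ} (V : Matrix (Fin N) (Fin N) ℂ) (hV2 : V * Vᴴ = 1)
    (d : Fin N → ℂ) (r : ℕ) :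
    (V * Matrix.diagonal d * Vᴴ) ^ r = V * Matrix.diagonal (fun j => d j ^ r) * Vᴴ := by
  induction r with
  | zero => simp [Matrix.diagonal_one, ← Matrix.mul_assoc, hV2]
  | succ n ih =>
    rw [pow_succ, ih]
    have h : Matrix.diagonal (fun j => d j ^ n) * (Vᴴ * V) * Matrix.diagonal d
        = Matrix.diagonal (fun j => d j ^ (n+1)) := by
      rw [mul_eq_one_comm.mp hV2]
      simp [Matrix.diagonal_mul_diagonal, pow_succ]
    calc (V * Matrix.diagonal (fun j => d j ^ n) * Vᴴ) * (V * Matrix.diagonal d * Vᴴ)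
        = V * (Matrix.diagonal (fun j => d j ^ n) * (Vᴴ * V) * Matrix.diagonal d) * Vᴴ := by
          simp only [Matrix.mul_assoc]
      _ = V * Matrix.diagonal (fun j => d j ^ (n+1)) * Vᴴ := by rw [h]

lemma jordan (θ : ℝ) (h0 : 0 ≤ θ) (h1 : θ ≤ 1) : θ / 2 ≤ Real.pi / 2 * Real.sin θ := by
  have hpi := Real.pi_gt_three
  rcases eq_or_lt_of_le h0 with h | h
  · simp [← h]
  · have h3 := Real.sin_gt_sub_cube h
    have h2 : θ ^ 2 ≤ 1 := by nlinarith
    have h4 : θ ^ 3 ≤ θ := by nlinarith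
    nlinarith

lemma scalar_key (r : ℕ) (t L : ℝ) (ht : 0 < t) (hL : 0 ≤ L)
    (hθ : t * Real.sqrt L ≤ 1) :
    (t / 2) ^ r * L ^ ((r : ℝ) / 2)
      ≤ (Real.pi / 2) ^ r * ‖Complex.exp (Complex.I * (t : ℂ) * (Real.sqrt L : ℂ)) - 1‖ ^ r := by
  have hθ0 : 0 ≤ t * Real.sqrt L := mul_nonneg ht.le (Real.sqrt_nonneg _)
  have hrpow : L ^ ((r : ℝ) / 2) = Real.sqrt L ^ r := by
    rw [Real.sqrt_eq_rpow, ← Real.rpow_natCast (L ^ ((1:ℝ)/2)) r, ← Real.rpow_mul hL]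
    ring_nf
  have hLHS : (t / 2) ^ r * L ^ ((r : ℝ) / 2) = (t * Real.sqrt L / 2) ^ r := by
    rw [hrpow, ← mul_pow]; ring_nf
  have hexp : Complex.I * (t : ℂ) * (Real.sqrt L : ℂ) = ((t * Real.sqrt L : ℝ) : ℂ) * Complex.I := by
    push_cast; ring
  have him : Real.sin (t * Real.sqrt L)
      ≤ ‖Complex.exp (Complex.I * (t : ℂ) * (Real.sqrt L : ℂ)) - 1‖ := by
    rw [hexp]
    have h1 : (Complex.exp (((t * Real.sqrt L : ℝ) : ℂ) * Complex.I) - 1).im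
        = Real.sin (t * Real.sqrt L) := by
      rw [Complex.sub_im, Complex.one_im, Complex.exp_ofReal_mul_I_im]; ring
    calc Real.sin (t * Real.sqrt L) ≤ |(Complex.exp (((t * Real.sqrt L : ℝ):ℂ) * Complex.I) - 1).im| := by
          rw [h1]; exact le_abs_self _
      _ ≤ ‖Complex.exp (((t * Real.sqrt L : ℝ):ℂ) * Complex.I) - 1‖ := Complex.abs_im_le_norm _
  have hjor := jordan (t * Real.sqrt L) hθ0 hθ
  have hmain : t * Real.sqrt L / 2
      ≤ Real.pi / 2 * ‖Complex.exp (Complex.I * (t : ℂ) * (Real.sqrt L : ℂ)) - 1‖ := by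
    have hpi := Real.pi_gt_three
    nlinarith
  calc (t / 2) ^ r * L ^ ((r : ℝ) / 2) = (t * Real.sqrt L / 2) ^ r := hLHS
    _ ≤ (Real.pi / 2 * ‖Complex.exp (Complex.I * (t : ℂ) * (Real.sqrt L : ℂ)) - 1‖) ^ r :=
        pow_le_pow_left₀ (by positivity) hmain r
    _ = _ := mul_pow _ _ r

end Aux7

/-- For every nonnegative integer `r`, every `f ∈ ℂ^N` and every `t`
with `0 < t ≤ λ_N^{-1/2}`, `K_r(f, t) ≤ (π/2)^r · ω_r(f, t)`. -/
theorem stmt7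
    (N : ℕ) (hN : 2 ≤ N)
    (u : Fin N → Fin N → ℂ)
    (hu : ∀ i j, star (u i) ⬝ᵥ u j = if i = j then 1 else 0)
    (lam : Fin N → ℝ) (hmono : Monotone lam)
    (hlam0 : lam ⟨0, by omega⟩ = 0) (hlam1 : 0 < lam ⟨1, by omega⟩)
    (r : ℕ) (f : Fin N → ℂ) (t : ℝ) (ht : 0 < t)
    (htN : t ≤ lam ⟨N - 1, by omega⟩ ^ (-(1 : ℝ) / 2)) :
    Kfun u lam r f t ≤ (Real.pi / 2) ^ r * omegaMod u lam r f t := by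
  classical
  set V : Matrix (Fin N) (Fin N) ℂ := (Matrix.of u)ᵀ with hVdef
  have hV1 : Vᴴ * V = 1 := Aux7.unitary1 u hu
  have hV2 : V * Vᴴ = 1 := mul_eq_one_comm.mp hV1
  set w : Fin N → ℂ := Vᴴ.mulVec f with hwdef
  -- eigenvalue facts
  have hlam_nonneg : ∀ j, 0 ≤ lam j := by
    intro j
    have hle : (⟨0, by omega⟩ : Fin N) ≤ j := by simp [Fin.le_def]
    calc (0:ℝ) = lam ⟨0, by omega⟩ := hlam0.symm
      _ ≤ lam j := hmono hle
  have hlamtop : ∀ j, lam j ≤ lam ⟨N-1, by omega⟩ := by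
    intro j
    refine hmono ?_
    have := j.isLt
    simp only [Fin.le_def]
    omega
  have hTop : 0 < lam ⟨N-1, by omega⟩ := lt_of_lt_of_le hlam1 (hlamtop _)
  have hsmall : ∀ j, t * Real.sqrt (lam j) ≤ 1 := by
    intro j
    have h1 : Real.sqrt (lam j) ≤ Real.sqrt (lam ⟨N-1, by omega⟩) :=
      Real.sqrt_le_sqrt (hlamtop j)
    have h2 : lam ⟨N-1, by omega⟩ ^ (-(1:ℝ)/2) = (Real.sqrt (lam ⟨N-1, by omega⟩))⁻¹ := by
      rw [show (-(1:ℝ)/2) = -(1/2) by norm_num, Real.rpow_neg hTop.le, ← Real.sqrt_eq_rpow]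
    have hs : 0 < Real.sqrt (lam ⟨N-1, by omega⟩) := Real.sqrt_pos.mpr hTop
    calc t * Real.sqrt (lam j)
        ≤ (Real.sqrt (lam ⟨N-1, by omega⟩))⁻¹ * Real.sqrt (lam ⟨N-1, by omega⟩) := by
          apply mul_le_mul (h2 ▸ htN) h1 (Real.sqrt_nonneg _) (by positivity)
      _ = 1 := inv_mul_cancel₀ hs.ne'
  -- coefficient functions
  set e : ℝ → Fin N → ℂ :=
    fun s j => Complex.exp (Complex.I * (s : ℂ) * (Real.sqrt (lam j) : ℂ)) with hedef
  -- matrix identities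
  have hTmat : ∀ s, (Tmat u lam s - 1) ^ r
      = V * Matrix.diagonal (fun j => (e s j - 1) ^ r) * Vᴴ := by
    intro s
    have hone : (1 : Matrix (Fin N) (Fin N) ℂ)
        = V * Matrix.diagonal (fun _ : Fin N => (1:ℂ)) * Vᴴ := by
      rw [Matrix.diagonal_one, Matrix.mul_one, hV2]
    have h1 : Tmat u lam s - 1 = V * Matrix.diagonal (fun j => e s j - 1) * Vᴴ := by
      conv_lhs => rw [Tmat, Aux7.specOp_eq', hone]
      rw [← Matrix.sub_mul, ← Matrix.mul_sub, Matrix.diagonal_sub]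
    rw [h1, Aux7.conj_pow V hV2]
  have hLpow : Lpow u lam ((r:ℝ)/2)
      = V * Matrix.diagonal (fun j => ((lam j ^ ((r:ℝ)/2) : ℝ) : ℂ)) * Vᴴ :=
    Aux7.specOp_eq' u _
  -- norm formulas
  have hnorm : ∀ c : Fin N → ℂ,
      cnorm2 ((V * Matrix.diagonal c * Vᴴ).mulVec f)
        = Real.sqrt (∑ j, ‖c j‖ ^ 2 * ‖w j‖ ^ 2) := by
    intro c
    rw [cnorm2, Aux7.norm_spec V hV1]
  have hc0 : ∀ v : Fin N → ℂ, 0 ≤ cnorm2 v := fun v => Real.sqrt_nonneg _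
  -- step A : Kfun ≤ value at g = f
  have hA : Kfun u lam r f t ≤ (t/2)^r * cnorm2 ((Lpow u lam ((r:ℝ)/2)).mulVec f) := by
    have hbdd : BddBelow (Set.range fun g : Fin N → ℂ =>
        cnorm2 (f - g) + (t / 2) ^ r * cnorm2 ((Lpow u lam ((r : ℝ) / 2)).mulVec g)) := by
      refine ⟨0, ?_⟩
      rintro x ⟨g, rfl⟩
      have := hc0 (f - g)
      have := hc0 ((Lpow u lam ((r : ℝ) / 2)).mulVec g)
      positivity
    have hinf : Kfun u lam r f t
        ≤ cnorm2 (f - f) + (t / 2) ^ r * cnorm2 ((Lpow u lam ((r : ℝ) / 2)).mulVec f) :=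
      ciInf_le hbdd f
    have hz : cnorm2 (f - f) = 0 := by simp [cnorm2]
    rw [hz, zero_add] at hinf
    exact hinf
  -- step B
  have hB : (t/2)^r * cnorm2 ((Lpow u lam ((r:ℝ)/2)).mulVec f)
      ≤ (Real.pi/2)^r * cnorm2 (((Tmat u lam t - 1) ^ r).mulVec f) := by
    rw [hLpow, hTmat, hnorm, hnorm]
    have hpull : ∀ (a S : ℝ), 0 ≤ a → 0 ≤ S → a * Real.sqrt S = Real.sqrt (a^2 * S) := by
      intro a S ha hS
      rw [Real.sqrt_mul (by positivity), Real.sqrt_sq ha]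
    have hS1 : (0:ℝ) ≤ ∑ j, ‖(((lam j ^ ((r:ℝ)/2) : ℝ)):ℂ)‖ ^ 2 * ‖w j‖ ^ 2 := by positivity
    have hS2 : (0:ℝ) ≤ ∑ j, ‖(e t j - 1) ^ r‖ ^ 2 * ‖w j‖ ^ 2 := by positivity
    rw [hpull _ _ (by positivity) hS1, hpull _ _ (by positivity) hS2]
    apply Real.sqrt_le_sqrt
    rw [Finset.mul_sum, Finset.mul_sum]
    apply Finset.sum_le_sum
    intro j _
    have hkey := Aux7.scalar_key r t (lam j) ht (hlam_nonneg j) (hsmall j)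
    have hn1 : ‖(((lam j ^ ((r:ℝ)/2) : ℝ)):ℂ)‖ = lam j ^ ((r:ℝ)/2) := by
      rw [Complex.norm_real, Real.norm_eq_abs, abs_of_nonneg (Real.rpow_nonneg (hlam_nonneg j) _)]
    have hn2 : ‖(e t j - 1) ^ r‖ = ‖e t j - 1‖ ^ r := norm_pow _ r
    have hle : (t/2)^r * ‖(((lam j ^ ((r:ℝ)/2) : ℝ)):ℂ)‖
        ≤ (Real.pi/2)^r * ‖(e t j - 1) ^ r‖ := by
      rw [hn1, hn2]; exact hkey
    calc ((t/2)^r)^2 * (‖(((lam j ^ ((r:ℝ)/2) : ℝ)):ℂ)‖ ^ 2 * ‖w j‖ ^ 2)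
        = ((t/2)^r * ‖(((lam j ^ ((r:ℝ)/2) : ℝ)):ℂ)‖)^2 * ‖w j‖ ^ 2 := by ring
      _ ≤ ((Real.pi/2)^r * ‖(e t j - 1) ^ r‖)^2 * ‖w j‖ ^ 2 := by
          apply mul_le_mul_of_nonneg_right _ (sq_nonneg _)
          exact pow_le_pow_left₀ (by positivity) hle 2
      _ = ((Real.pi/2)^r)^2 * (‖(e t j - 1) ^ r‖ ^ 2 * ‖w j‖ ^ 2) := by ring
  -- step C
  have hC : cnorm2 (((Tmat u lam t - 1) ^ r).mulVec f) ≤ omegaMod u lam r f t := by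
    have hbound : ∀ s : ℝ, cnorm2 (((Tmat u lam s - 1) ^ r).mulVec f)
        ≤ 2^r * Real.sqrt (∑ j, ‖w j‖^2) := by
      intro s
      rw [hTmat, hnorm]
      have h2 : ∀ j, ‖(e s j - 1) ^ r‖ ≤ 2^r := by
        intro j
        rw [norm_pow]
        apply pow_le_pow_left₀ (norm_nonneg _)
        have hexp1 : ‖e s j‖ = 1 := by
          simp only [hedef]
          have : Complex.I * (s : ℂ) * (Real.sqrt (lam j) : ℂ)
              = ((s * Real.sqrt (lam j) : ℝ) : ℂ) * Complex.I := by push_cast; ring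
          rw [this, Complex.norm_exp_ofReal_mul_I]
        calc ‖e s j - 1‖ ≤ ‖e s j‖ + ‖(1:ℂ)‖ := norm_sub_le _ _
          _ = 2 := by rw [hexp1, norm_one]; norm_num
      have hterm : ∀ j ∈ Finset.univ, ‖(e s j - 1)^r‖^2 * ‖w j‖^2
          ≤ (2^r)^2 * ‖w j‖^2 := by
        intro j _
        apply mul_le_mul_of_nonneg_right _ (sq_nonneg _)
        exact pow_le_pow_left₀ (norm_nonneg _) (h2 j) 2
      calc Real.sqrt (∑ j, ‖(e s j - 1)^r‖^2 * ‖w j‖^2)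
          ≤ Real.sqrt (∑ j, (2^r)^2 * ‖w j‖^2) :=
            Real.sqrt_le_sqrt (Finset.sum_le_sum hterm)
        _ = 2^r * Real.sqrt (∑ j, ‖w j‖^2) := by
            rw [← Finset.mul_sum, Real.sqrt_mul (by positivity), Real.sqrt_sq (by positivity)]
    have hBdd : BddAbove (Set.range fun s : {s : ℝ // |s| ≤ t} =>
        cnorm2 (((Tmat u lam s.1 - 1) ^ r).mulVec f)) := by
      refine ⟨2^r * Real.sqrt (∑ j, ‖w j‖^2), ?_⟩
      rintro x ⟨s, rfl⟩
      exact hbound s.1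
    have := le_ciSup hBdd (⟨t, by rw [abs_of_pos ht]⟩ : {s : ℝ // |s| ≤ t})
    exact this
  calc Kfun u lam r f t ≤ (t/2)^r * cnorm2 ((Lpow u lam ((r:ℝ)/2)).mulVec f) := hA
    _ ≤ (Real.pi/2)^r * cnorm2 (((Tmat u lam t - 1) ^ r).mulVec f) := hB
    _ ≤ (Real.pi/2)^r * omegaMod u lam r f t := by
        apply mul_le_mul_of_nonneg_left hC (by positivity)
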